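/- Let R be the ring of integers of a number field K, 𝔭 a nonzero prime ideal, and 𝔞, 𝔞₁, …, 𝔞ₙ fractional ideals with 𝔞ᵢ ∖ 𝔭𝔞ᵢ ⊆ 𝔞 ∖ 𝔭𝔞 for all i and (𝔞 ∖ {0}) = ⋃_{i=1}^n (𝔞ᵢ ∖ 𝔭𝔞ᵢ) ∪ (𝔭𝔞 ∖ {0}). Then 𝔞ᵢ ⊆ 𝔞 for all i, and there exists an index i with 𝔞 = 𝔞ᵢ. -/

import Mathlib

open IsDedekindDomain FractionalIdeal

section Aux

variable {R : Type*} [CommRing R] [IsDedekindDomain R]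
  {K : Type*} [Field K] [Algebra R K] [IsFractionRing R K]

/-- A product `q * 𝔞` with `q` a proper ideal is strictly smaller than `𝔞`. -/
lemma aux_mul_lt (𝔞 : FractionalIdeal (nonZeroDivisors R) K) (h𝔞 : 𝔞 ≠ 0)
    (q : Ideal R) (hq : q ≠ ⊤) :
    ((q : FractionalIdeal (nonZeroDivisors R) K) * 𝔞) < 𝔞 := by
  have hle : ((q : FractionalIdeal (nonZeroDivisors R) K) * 𝔞) ≤ 𝔞 := by
    have := mul_le_mul_left (coeIdeal_le_one (I := q) (P := K)) 𝔞
    rwa [one_mul] at this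
  refine lt_of_le_of_ne hle fun h => ?_
  have h1 : (q : FractionalIdeal (nonZeroDivisors R) K) = 1 :=
    mul_right_cancel₀ h𝔞 (h.trans (one_mul 𝔞).symm)
  exact hq (by simpa using coeIdeal_eq_one.mp h1)

/-- Approximation: an element of `𝔞` outside `q𝔞` for each maximal `q` in a finite set. -/
lemma aux_exists_mem_notMem (𝔞 : FractionalIdeal (nonZeroDivisors R) K) (h𝔞 : 𝔞 ≠ 0)
    (S : Finset (Ideal R)) (hS : ∀ q ∈ S, q.IsMaximal) :
    ∃ x, x ∈ 𝔞 ∧ ∀ q ∈ S, x ∉ ((q : FractionalIdeal (nonZeroDivisors R) K) * 𝔞) := by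
  classical
  have h1 : ∀ q ∈ S, ∃ x, x ∈ 𝔞 ∧ x ∉ ((q : FractionalIdeal (nonZeroDivisors R) K) * 𝔞) := by
    intro q hq
    obtain ⟨x, hx, hx'⟩ := SetLike.exists_of_lt (aux_mul_lt 𝔞 h𝔞 q (hS q hq).ne_top)
    exact ⟨x, hx, hx'⟩
  choose x hx hx' using h1
  have key : ∀ q ∈ S, ∃ e : R, e - 1 ∈ q ∧ ∀ r ∈ S, r ≠ q → e ∈ r := by
    intro q hq
    have hcop : ∀ r ∈ S.erase q, IsCoprime q r := fun r hr =>
      Ideal.isCoprime_iff_sup_eq.mpr ((hS q hq).coprime_of_ne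
        (hS r (Finset.mem_of_mem_erase hr)) (Finset.ne_of_mem_erase hr).symm)
    rcases Ideal.isCoprime_iff_exists.mp (Ideal.isCoprime_biInf hcop) with ⟨u, hu, e, he, hue⟩
    refine ⟨e, ?_, ?_⟩
    · have : e - 1 = -u := by linear_combination hue
      rw [this]; exact q.neg_mem hu
    · intro r hr hrq
      have : e ∈ ⨅ i ∈ S.erase q, i := he
      simp only [Ideal.mem_iInf] at this
      exact this r (Finset.mem_erase.mpr ⟨hrq, hr⟩)
  choose e he he' using key
  refine ⟨∑ q ∈ S.attach, e q q.2 • x q q.2, ?_, ?_⟩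
  · exact Submodule.sum_mem _ fun q _ => Submodule.smul_mem _ _ (hx q q.2)
  · intro q₀ hq₀
    set N := ((q₀ : FractionalIdeal (nonZeroDivisors R) K) * 𝔞) with hN
    have hsmul : ∀ r ∈ q₀, ∀ z ∈ 𝔞, r • z ∈ N := by
      intro r hr z hz
      rw [Algebra.smul_def]
      exact mul_mem_mul (mem_coeIdeal_of_mem _ hr) hz
    intro hy
    set a : {q // q ∈ S} := ⟨q₀, hq₀⟩
    have hsplit : (∑ q ∈ S.attach, e q q.2 • x q q.2)
        = e q₀ hq₀ • x q₀ hq₀ + ∑ q ∈ S.attach.erase a, e q q.2 • x q q.2 :=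
      (Finset.add_sum_erase S.attach _ (S.mem_attach a)).symm
    have hdiff : (∑ q ∈ S.attach, e q q.2 • x q q.2) - x q₀ hq₀ ∈ N := by
      rw [hsplit]
      have h1 : e q₀ hq₀ • x q₀ hq₀ + ∑ q ∈ S.attach.erase a, e q q.2 • x q q.2 - x q₀ hq₀
          = (e q₀ hq₀ - 1) • x q₀ hq₀ + ∑ q ∈ S.attach.erase a, e q q.2 • x q q.2 := by
        rw [sub_smul, one_smul]; ring
      rw [h1]
      refine Submodule.add_mem _ (hsmul _ (he q₀ hq₀) _ (hx q₀ hq₀)) ?_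
      refine Submodule.sum_mem _ fun q hq => ?_
      have hqne : (q : Ideal R) ≠ q₀ := by
        intro h
        exact (Finset.ne_of_mem_erase hq) (Subtype.ext h)
      exact hsmul _ (he' q q.2 q₀ hq₀ hqne.symm) _ (hx q q.2)
    have : x q₀ hq₀ ∈ N := by
      have := Submodule.sub_mem (N : Submodule R K) hy hdiff
      simpa using this
    exact hx' q₀ hq₀ this

end Aux

/-- If `𝔞ᵢ ∖ 𝔭𝔞ᵢ ⊆ 𝔞 ∖ 𝔭𝔞` for all `i` and
`𝔞 ∖ {0} = ⋃ᵢ (𝔞ᵢ ∖ 𝔭𝔞ᵢ) ∪ (𝔭𝔞 ∖ {0})`, then each `𝔞ᵢ ⊆ 𝔞` and `𝔞 = 𝔞ᵢ` for some `i`. -/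
theorem statement19 (K : Type*) [Field K] [NumberField K]
    (𝔭 : HeightOneSpectrum (NumberField.RingOfIntegers K))
    (𝔞 : FractionalIdeal (nonZeroDivisors (NumberField.RingOfIntegers K)) K) (h𝔞 : 𝔞 ≠ 0)
    (n : ℕ) (𝔟 : Fin n → FractionalIdeal (nonZeroDivisors (NumberField.RingOfIntegers K)) K)
    (h𝔟 : ∀ i, 𝔟 i ≠ 0)
    (hsub : ∀ i, (𝔟 i : Set K) \ ((((𝔭.asIdeal :
        FractionalIdeal (nonZeroDivisors (NumberField.RingOfIntegers K)) K)) * 𝔟 i) : Set K)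
      ⊆ (𝔞 : Set K) \ ((((𝔭.asIdeal :
        FractionalIdeal (nonZeroDivisors (NumberField.RingOfIntegers K)) K)) * 𝔞) : Set K))
    (hcover : (𝔞 : Set K) \ {0}
      = (⋃ i, ((𝔟 i : Set K) \ ((((𝔭.asIdeal :
          FractionalIdeal (nonZeroDivisors (NumberField.RingOfIntegers K)) K)) * 𝔟 i) : Set K)))
        ∪ (((((𝔭.asIdeal :
          FractionalIdeal (nonZeroDivisors (NumberField.RingOfIntegers K)) K)) * 𝔞) : Set K)
          \ {0})) :
    (∀ i, 𝔟 i ≤ 𝔞) ∧ ∃ i, 𝔞 = 𝔟 i := by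
  classical
  set R := NumberField.RingOfIntegers K
  set P : FractionalIdeal (nonZeroDivisors R) K := (𝔭.asIdeal : FractionalIdeal (nonZeroDivisors R) K) with hP
  -- Part 1: each 𝔟 i ≤ 𝔞
  have part1 : ∀ i, 𝔟 i ≤ 𝔞 := by
    intro i
    obtain ⟨x, hxb, hxnb⟩ := SetLike.exists_of_lt
      (aux_mul_lt (𝔟 i) (h𝔟 i) 𝔭.asIdeal 𝔭.isPrime.ne_top)
    have hxa : x ∈ 𝔞 := (hsub i ⟨hxb, hxnb⟩).1
    intro y hy
    by_cases hyP : y ∈ P * 𝔟 i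
    · have hxy : x + y ∈ 𝔟 i := Submodule.add_mem _ hxb hy
      have hxyn : x + y ∉ P * 𝔟 i := fun h => hxnb (by
        have h2 := Submodule.sub_mem ((P * 𝔟 i : FractionalIdeal (nonZeroDivisors R) K) :
          Submodule R K) (mem_coe.mpr h) (mem_coe.mpr hyP)
        rw [add_sub_cancel_right] at h2
        exact mem_coe.mp h2)
      have hxya : x + y ∈ 𝔞 := (hsub i ⟨hxy, hxyn⟩).1
      have h3 := Submodule.sub_mem (𝔞 : Submodule R K) (mem_coe.mpr hxya) (mem_coe.mpr hxa)
      rw [add_sub_cancel_left] at h3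
      exact mem_coe.mp h3
    · exact (hsub i ⟨hy, hyP⟩).1
  refine ⟨part1, ?_⟩
  by_contra hcon
  push_neg at hcon
  -- each 𝔟 i is contained in q i * 𝔞 for a maximal ideal q i
  have hq : ∀ i, ∃ q : Ideal R, q.IsMaximal ∧
      𝔟 i ≤ (q : FractionalIdeal (nonZeroDivisors R) K) * 𝔞 := by
    intro i
    have hinv : 𝔞 * 𝔞⁻¹ = 1 := mul_inv_cancel₀ h𝔞
    have hle1 : 𝔟 i * 𝔞⁻¹ ≤ 1 := by
      have := mul_le_mul_left (part1 i) 𝔞⁻¹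
      rwa [hinv] at this
    obtain ⟨I, hI⟩ := le_one_iff_exists_coeIdeal.mp hle1
    have hbi : 𝔟 i = (I : FractionalIdeal (nonZeroDivisors R) K) * 𝔞 := by
      rw [hI, mul_assoc, mul_comm 𝔞⁻¹ 𝔞, hinv, mul_one]
    have hItop : I ≠ ⊤ := by
      intro hT
      apply hcon i
      rw [hbi, hT]
      simp
    obtain ⟨q, hqmax, hIq⟩ := Ideal.exists_le_maximal I hItop
    refine ⟨q, hqmax, ?_⟩
    rw [hbi]
    have := mul_le_mul_left ((coeIdeal_le_coeIdeal K).mpr hIq) 𝔞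
    exact this
  choose q hqmax hqle using hq
  set S : Finset (Ideal R) := insert 𝔭.asIdeal (Finset.image q Finset.univ) with hS
  have hSmax : ∀ r ∈ S, r.IsMaximal := by
    intro r hr
    rcases Finset.mem_insert.mp hr with h | h
    · exact h ▸ 𝔭.isPrime.isMaximal 𝔭.ne_bot
    · obtain ⟨i, _, rfl⟩ := Finset.mem_image.mp h
      exact hqmax i
  obtain ⟨x, hxa, hxn⟩ := aux_exists_mem_notMem 𝔞 h𝔞 S hSmax
  have hx0 : x ≠ 0 := by
    intro h
    exact hxn 𝔭.asIdeal (Finset.mem_insert_self _ _) (h ▸ zero_mem _)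
  have hxmem : x ∈ (𝔞 : Set K) \ {0} := ⟨hxa, hx0⟩
  rw [hcover] at hxmem
  rcases hxmem with h | h
  · obtain ⟨s, ⟨i, rfl⟩, hxs⟩ := h
    have hxb : x ∈ 𝔟 i := hxs.1
    exact hxn (q i) (Finset.mem_insert_of_mem (Finset.mem_image_of_mem q (Finset.mem_univ i)))
      (hqle i hxb)
  · exact hxn 𝔭.asIdeal (Finset.mem_insert_self _ _) h.1
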